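/- If a graph H with m edges satisfies t(H,W) + t(H,1−W) ≥ 2^{1−m} for all graphons W, and I_1, I_2 are independent sets at successive stages (I_1 independent in H, and I_2 independent in H_{I_1}^q), then the iterated book (H_{I_1}^q)_{I_2}^{q'} is common with q·q'·m edges. -/

import Mathlib

open MeasureTheory

abbrev unitI : Type := Set.Icc (0:ℝ) 1

structure Graphon where
  W : unitI → unitI → ℝ
  symm : ∀ x y, W x y = W y x
  measurable : Measurable fun p : unitI × unitI => W p.1 p.2
  nonneg : ∀ x y, 0 ≤ W x y
  le_one : ∀ x y, W x y ≤ 1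

def Graphon.compl (W : Graphon) : Graphon where
  W x y := 1 - W.W x y
  symm x y := by show 1 - W.W x y = 1 - W.W y x; rw [W.symm]
  measurable := measurable_const.sub W.measurable
  nonneg x y := by show 0 ≤ 1 - W.W x y; linarith [W.le_one x y]
  le_one x y := by show 1 - W.W x y ≤ 1; linarith [W.nonneg x y]

noncomputable def homDensity {V : Type} [Fintype V] (H : SimpleGraph V) (W : Graphon) : ℝ :=
  ∫ x : V → unitI,
    ∏ᶠ (e : Sym2 V) (_ : e ∈ H.edgeSet),
      Sym2.lift ⟨fun u v => W.W (x u) (x v), fun u v => W.symm (x u) (x v)⟩ e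

def IsCommon {V : Type} [Fintype V] (H : SimpleGraph V) : Prop :=
  ∀ W : Graphon,
    (2:ℝ) ^ (1 - (Nat.card H.edgeSet : ℤ)) ≤ homDensity H W + homDensity H W.compl

/-- Vertex set of the `q`-book of a graph on `V` along `I`. -/
abbrev BookVerts (V : Type) [DecidableEq V] (I : Finset V) (q : ℕ) : Type :=
  {v : V // v ∈ I} ⊕ (Fin q × {v : V // v ∉ I})

/-- The canonical embedding of the `j`-th page. -/
def bookEmb {V : Type} [DecidableEq V] (I : Finset V) (q : ℕ) (j : Fin q) (v : V) :
    BookVerts V I q :=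
  if h : v ∈ I then Sum.inl ⟨v, h⟩ else Sum.inr (j, ⟨v, h⟩)

lemma bookEmb_injective {V : Type} [DecidableEq V] (I : Finset V) (q : ℕ) (j : Fin q) :
    Function.Injective (bookEmb I q j) := by
  intro a b hab
  unfold bookEmb at hab
  split_ifs at hab with h1 h2 h2 <;> simp_all

/-- The `q`-book of `H` along `I`. -/
def book {V : Type} [DecidableEq V] (H : SimpleGraph V) (I : Finset V) (q : ℕ) :
    SimpleGraph (BookVerts V I q) where
  Adj a b := ∃ (j : Fin q) (u v : V), H.Adj u v ∧ a = bookEmb I q j u ∧ b = bookEmb I q j v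
  symm := ⟨by rintro a b ⟨j, u, v, h, ha, hb⟩; exact ⟨j, v, u, h.symm, hb, ha⟩⟩
  loopless := ⟨by
    rintro a ⟨j, u, v, h, ha, hb⟩
    exact H.loopless.irrefl v (by rwa [bookEmb_injective I q j (ha.symm.trans hb ▸ rfl : bookEmb I q j u = bookEmb I q j v)] at h)⟩

/-- `I` is an independent set of `H`. -/
def IndepIn {V : Type} (H : SimpleGraph V) (I : Finset V) : Prop :=
  ∀ u ∈ I, ∀ v ∈ I, ¬ H.Adj u v


/-- curry as a measurable equiv -/
def IBcurry (ι κ α : Type*) [MeasurableSpace α] : ((ι × κ) → α) ≃ᵐ (ι → κ → α) where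
  toEquiv := Equiv.curry ι κ α
  measurable_toFun := measurable_pi_lambda _ fun i => measurable_pi_lambda _ fun k =>
    measurable_pi_apply (i, k)
  measurable_invFun := measurable_pi_lambda _ fun p =>
    (measurable_pi_apply p.2).comp (measurable_pi_apply p.1)

lemma IBcurry_mp (ι κ α : Type*) [Fintype ι] [Fintype κ] [MeasureSpace α]
    [SigmaFinite (volume : Measure α)] :
    MeasurePreserving (IBcurry ι κ α) volume volume := by
  have h : MeasurePreserving ((IBcurry ι κ α).symm) volume volume := by
    refine ⟨(IBcurry ι κ α).symm.measurable, ?_⟩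
    rw [show (volume : Measure (ι × κ → α)) = Measure.pi fun _ => volume from volume_pi]
    refine (Measure.pi_eq fun s hs => ?_).symm
    rw [Measure.map_apply (IBcurry ι κ α).symm.measurable (MeasurableSet.univ_pi hs)]
    have hpre : (IBcurry ι κ α).symm ⁻¹' (Set.univ.pi s)
        = Set.univ.pi (fun i => Set.univ.pi (fun k => s (i, k))) := by
      ext f
      simp [IBcurry, Equiv.curry, Set.mem_pi, Prod.forall, Function.uncurry]
    rw [hpre]
    rw [show (volume : Measure (ι → κ → α)) = Measure.pi fun _ => volume from volume_pi,
      Measure.pi_pi]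
    simp_rw [show (volume : Measure (κ → α)) = Measure.pi fun _ => volume from volume_pi,
      Measure.pi_pi]
    rw [Fintype.prod_prod_type]
  simpa using h.symm (IBcurry ι κ α).symm

lemma IBintegrable {α : Type*} [MeasureSpace α] [IsFiniteMeasure (volume : Measure α)]
    {f : α → ℝ} (hm : Measurable f) {C : ℝ} (h : ∀ x, |f x| ≤ C) : Integrable f :=
  ⟨hm.aestronglyMeasurable, HasFiniteIntegral.of_bounded (C := C)
    (Filter.Eventually.of_forall fun x => by simpa [Real.norm_eq_abs] using h x)⟩

lemma IBsum_split {A C : Type} [Fintype A] [Fintype C]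
    (f : ((A ⊕ C) → unitI) → ℝ) (hmeas : Measurable f) (hbd : ∀ X, |f X| ≤ 1) :
    ∫ X, f X = ∫ x : A → unitI, ∫ y : C → unitI, f (Sum.elim x y) := by
  have hmp := measurePreserving_sumPiEquivProdPi_symm (fun _ : A ⊕ C => (volume : Measure unitI))
  have h1 : ∫ X, f X = ∫ p : (A → unitI) × (C → unitI),
      f ((MeasurableEquiv.sumPiEquivProdPi (fun _ => unitI)).symm p) := by
    rw [show (volume : Measure ((A ⊕ C) → unitI)) = Measure.pi fun _ => volume from volume_pi]
    rw [← hmp.integral_comp']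
    rw [show ((Measure.pi fun _ : A => (volume : Measure unitI)).prod
      (Measure.pi fun _ : C => (volume : Measure unitI)))
        = (volume : Measure ((A → unitI) × (C → unitI))) by
        rw [Measure.volume_eq_prod, volume_pi, volume_pi]]
  have helim : ∀ (p : (A → unitI) × (C → unitI)),
      (MeasurableEquiv.sumPiEquivProdPi (fun _ : A ⊕ C => unitI)).symm p = Sum.elim p.1 p.2 := by
    intro p; funext i; cases i <;> rfl
  rw [h1]
  have hfg : (fun p : (A → unitI) × (C → unitI) =>
      f ((MeasurableEquiv.sumPiEquivProdPi (fun _ : A ⊕ C => unitI)).symm p))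
      = fun p => f (Sum.elim p.1 p.2) := by
    funext p; rw [helim]
  have hint : Integrable (fun p : (A → unitI) × (C → unitI) =>
      f ((MeasurableEquiv.sumPiEquivProdPi (fun _ : A ⊕ C => unitI)).symm p)) := by
    apply IBintegrable _ (fun p => hbd _)
    exact hmeas.comp (MeasurableEquiv.sumPiEquivProdPi (fun _ : A ⊕ C => unitI)).symm.measurable
  rw [Measure.volume_eq_prod] at hint ⊢
  rw [MeasureTheory.integral_prod _ hint]
  refine congrArg _ (funext fun x => congrArg _ (funext fun y => ?_))
  rw [helim (x, y)]


/-! ### edge values and the integrand -/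

noncomputable def edgeVal (W : Graphon) {V : Type} (x : V → unitI) : Sym2 V → ℝ :=
  Sym2.lift ⟨fun u v => W.W (x u) (x v), fun u v => W.symm (x u) (x v)⟩

noncomputable def edgeFun (W : Graphon) {V : Type} (H : SimpleGraph V) (x : V → unitI) : ℝ :=
  ∏ᶠ (e : Sym2 V) (_ : e ∈ H.edgeSet), edgeVal W x e

lemma homDensity_eq {V : Type} [Fintype V] (H : SimpleGraph V) (W : Graphon) :
    homDensity H W = ∫ x : V → unitI, edgeFun W H x := rfl

lemma edgeVal_nonneg (W : Graphon) {V : Type} (x : V → unitI) (e : Sym2 V) :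
    0 ≤ edgeVal W x e := by
  induction e using Sym2.ind with
  | _ u v => exact W.nonneg _ _

lemma edgeVal_le_one (W : Graphon) {V : Type} (x : V → unitI) (e : Sym2 V) :
    edgeVal W x e ≤ 1 := by
  induction e using Sym2.ind with
  | _ u v => exact W.le_one _ _

lemma edgeVal_measurable (W : Graphon) {V : Type} (e : Sym2 V) :
    Measurable fun x : V → unitI => edgeVal W x e := by
  induction e using Sym2.ind with
  | _ u v =>
    have h : (fun x : V → unitI => edgeVal W x s(u, v)) = fun x => W.W (x u) (x v) := by
      funext x; simp [edgeVal]
    rw [h]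
    exact Measurable.comp (f := fun x : V → unitI => (x u, x v))
      (g := fun p : unitI × unitI => W.W p.1 p.2) W.measurable
      ((measurable_pi_apply u).prodMk (measurable_pi_apply v))

lemma edgeVal_map (W : Graphon) {V V' : Type} (x : V' → unitI) (g : V → V') (e : Sym2 V) :
    edgeVal W x (Sym2.map g e) = edgeVal W (x ∘ g) e := by
  induction e using Sym2.ind with
  | _ u v => rfl

lemma edgeFun_eq_prod (W : Graphon) {V : Type} [Fintype V] (H : SimpleGraph V) (x : V → unitI) :
    edgeFun W H x = ∏ e ∈ H.edgeSet.toFinite.toFinset, edgeVal W x e :=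
  finprod_mem_eq_finite_toFinset_prod _ _

lemma edgeFun_nonneg (W : Graphon) {V : Type} [Fintype V] (H : SimpleGraph V) (x : V → unitI) :
    0 ≤ edgeFun W H x := by
  rw [edgeFun_eq_prod]
  exact Finset.prod_nonneg fun e _ => edgeVal_nonneg W x e

lemma edgeFun_le_one (W : Graphon) {V : Type} [Fintype V] (H : SimpleGraph V) (x : V → unitI) :
    edgeFun W H x ≤ 1 := by
  rw [edgeFun_eq_prod]
  exact Finset.prod_le_one (fun e _ => edgeVal_nonneg W x e) (fun e _ => edgeVal_le_one W x e)

lemma edgeFun_abs_le_one (W : Graphon) {V : Type} [Fintype V] (H : SimpleGraph V)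
    (x : V → unitI) : |edgeFun W H x| ≤ 1 :=
  abs_le.2 ⟨le_trans (by norm_num) (edgeFun_nonneg W H x), edgeFun_le_one W H x⟩

lemma edgeFun_measurable (W : Graphon) {V : Type} [Fintype V] (H : SimpleGraph V) :
    Measurable fun x : V → unitI => edgeFun W H x := by
  simp only [edgeFun_eq_prod]
  exact Finset.measurable_prod _ fun e _ => edgeVal_measurable W e


/-! ### splitting along an independent set -/

def glue {V : Type} [DecidableEq V] (I : Finset V) (x : {v : V // v ∈ I} → unitI)
    (y : {v : V // v ∉ I} → unitI) (v : V) : unitI :=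
  if h : v ∈ I then x ⟨v, h⟩ else y ⟨v, h⟩

lemma glue_measurable {V : Type} [DecidableEq V] (I : Finset V) :
    Measurable fun p : ({v : V // v ∈ I} → unitI) × ({v : V // v ∉ I} → unitI) =>
      (glue I p.1 p.2 : V → unitI) := by
  apply measurable_pi_lambda
  intro v
  by_cases h : v ∈ I
  · simp only [glue, dif_pos h]
    exact (measurable_pi_apply _).comp measurable_fst
  · simp only [glue, dif_neg h]
    exact (measurable_pi_apply _).comp measurable_snd

noncomputable def pageInt (W : Graphon) {V : Type} [Fintype V] [DecidableEq V] (H : SimpleGraph V)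
    (I : Finset V) (x : {v : V // v ∈ I} → unitI) : ℝ :=
  ∫ y : {v : V // v ∉ I} → unitI, edgeFun W H (glue I x y)

variable {V : Type} [Fintype V] [DecidableEq V]

lemma pageInt_nonneg (W : Graphon) (H : SimpleGraph V) (I : Finset V)
    (x : {v : V // v ∈ I} → unitI) : 0 ≤ pageInt W H I x := by
  unfold pageInt
  exact integral_nonneg fun y => edgeFun_nonneg W H _

lemma pageInt_le_one (W : Graphon) (H : SimpleGraph V) (I : Finset V)
    (x : {v : V // v ∈ I} → unitI) : pageInt W H I x ≤ 1 := by
  have h := integral_mono (μ := (volume : Measure ({v : V // v ∉ I} → unitI)))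
    (f := fun y => edgeFun W H (glue I x y)) (g := fun _ => (1:ℝ))
    (IBintegrable ((edgeFun_measurable W H).comp
      ((glue_measurable I).comp (measurable_const.prodMk measurable_id)))
      (fun y => edgeFun_abs_le_one W H _))
    (integrable_const 1) (fun y => edgeFun_le_one W H _)
  unfold pageInt
  simpa using h

lemma pageInt_measurable (W : Graphon) (H : SimpleGraph V) (I : Finset V) :
    Measurable fun x => pageInt W H I x := by
  have h : StronglyMeasurable fun p :
      ({v : V // v ∈ I} → unitI) × ({v : V // v ∉ I} → unitI) =>
      edgeFun W H (glue I p.1 p.2) :=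
    ((edgeFun_measurable W H).comp (glue_measurable I)).stronglyMeasurable
  unfold pageInt
  exact h.integral_prod_right'.measurable

lemma pageInt_abs_le_one (W : Graphon) (H : SimpleGraph V) (I : Finset V)
    (x : {v : V // v ∈ I} → unitI) : |pageInt W H I x| ≤ 1 :=
  abs_le.2 ⟨le_trans (by norm_num) (pageInt_nonneg W H I x), pageInt_le_one W H I x⟩

lemma homDensity_split (W : Graphon) (H : SimpleGraph V) (I : Finset V) :
    homDensity H W = ∫ x : {v : V // v ∈ I} → unitI, pageInt W H I x := by
  classical
  set e : {v : V // v ∈ I} ⊕ {v : V // v ∉ I} ≃ V := Equiv.sumCompl (· ∈ I) with he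
  have hmp := MeasureTheory.measurePreserving_arrowCongr'
    (fun _ : {v : V // v ∈ I} ⊕ {v : V // v ∉ I} => (volume : Measure unitI))
    (fun _ : V => (volume : Measure unitI)) e (MeasurableEquiv.refl unitI)
    (fun _ => MeasurePreserving.id _)
  have h1 : homDensity H W = ∫ X : ({v : V // v ∈ I} ⊕ {v : V // v ∉ I}) → unitI,
      edgeFun W H (fun v => X (e.symm v)) := by
    have h2 := hmp.integral_comp' (g := fun z : V → unitI => edgeFun W H z)
    rw [homDensity_eq, show (volume : Measure (V → unitI)) = Measure.pi fun _ => volume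
      from volume_pi, ← h2,
      show (Measure.pi fun _ : {v : V // v ∈ I} ⊕ {v : V // v ∉ I} =>
        (volume : Measure unitI)) = volume from (volume_pi).symm]
    rfl
  rw [h1, IBsum_split (fun X => edgeFun W H (fun v => X (e.symm v)))
      ((edgeFun_measurable W H).comp
      (measurable_pi_lambda _ fun v => measurable_pi_apply _))
      (fun X => edgeFun_abs_le_one W H _)]
  refine congrArg _ (funext fun x => congrArg _ (funext fun y => congrArg _ (funext fun v => ?_)))
  by_cases h : v ∈ I
  · rw [show e.symm v = Sum.inl ⟨v, h⟩ by simp [he, Equiv.sumCompl, h]]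
    simp [glue, h]
  · rw [show e.symm v = Sum.inr ⟨v, h⟩ by simp [he, Equiv.sumCompl, h]]
    simp [glue, h]


/-! ### book edge combinatorics -/

section BookEdges

variable {V : Type} [Fintype V] [DecidableEq V]

lemma bookEmb_eq_cases {I : Finset V} {q : ℕ} {j j' : Fin q} {a b : V}
    (h : bookEmb I q j a = bookEmb I q j' b) : a = b ∧ (a ∉ I → j = j') := by
  unfold bookEmb at h
  split_ifs at h with h1 h2 h2 <;> simp_all

lemma mem_book_edgeSet (H : SimpleGraph V) (I : Finset V) (q : ℕ) (e' : Sym2 (BookVerts V I q)) :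
    e' ∈ (book H I q).edgeSet ↔
      ∃ j : Fin q, ∃ e ∈ H.edgeSet, Sym2.map (bookEmb I q j) e = e' := by
  induction e' using Sym2.ind with
  | _ a b =>
    constructor
    · rintro ⟨j, u, v, h, ha, hb⟩
      exact ⟨j, s(u, v), H.mem_edgeSet.2 h, by rw [Sym2.map_pair_eq, ← ha, ← hb]⟩
    · rintro ⟨j, e, he, hmap⟩
      induction e using Sym2.ind with
      | _ u v =>
        rw [Sym2.map_pair_eq, Sym2.eq_iff] at hmap
        rcases hmap with ⟨ha, hb⟩ | ⟨ha, hb⟩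
        · exact ⟨j, u, v, H.mem_edgeSet.1 he, ha.symm, hb.symm⟩
        · exact ⟨j, v, u, (H.mem_edgeSet.1 he).symm, hb.symm, ha.symm⟩

lemma book_edge_inj (H : SimpleGraph V) {I : Finset V} (hI : IndepIn H I) (q : ℕ)
    {j j' : Fin q} {e e' : Sym2 V} (he : e ∈ H.edgeSet) (he' : e' ∈ H.edgeSet)
    (h : Sym2.map (bookEmb I q j) e = Sym2.map (bookEmb I q j') e') : j = j' ∧ e = e' := by
  induction e using Sym2.ind with
  | _ u v =>
  induction e' using Sym2.ind with
  | _ u' v' =>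
    rw [Sym2.map_pair_eq, Sym2.map_pair_eq, Sym2.eq_iff] at h
    have hadj : H.Adj u v := H.mem_edgeSet.1 he
    have hnotI : u ∉ I ∨ v ∉ I := by
      by_contra hc
      push_neg at hc
      exact hI u hc.1 v hc.2 hadj
    rcases h with ⟨h1, h2⟩ | ⟨h1, h2⟩
    · obtain ⟨huu, hju⟩ := bookEmb_eq_cases h1
      obtain ⟨hvv, hjv⟩ := bookEmb_eq_cases h2
      refine ⟨?_, by rw [huu, hvv]⟩
      rcases hnotI with h | h
      · exact hju h
      · exact hjv h
    · obtain ⟨huu, hju⟩ := bookEmb_eq_cases h1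
      obtain ⟨hvv, hjv⟩ := bookEmb_eq_cases h2
      refine ⟨?_, ?_⟩
      · rcases hnotI with h | h
        · exact hju h
        · exact hjv h
      · rw [huu, hvv]; exact Sym2.eq_swap

lemma book_edge_count (H : SimpleGraph V) {I : Finset V} (hI : IndepIn H I) (q : ℕ) :
    Nat.card (book H I q).edgeSet = q * Nat.card H.edgeSet := by
  have hb : Function.Bijective (fun p : Fin q × H.edgeSet =>
      (⟨Sym2.map (bookEmb I q p.1) p.2.1,
        (mem_book_edgeSet H I q _).2 ⟨p.1, p.2.1, p.2.2, rfl⟩⟩ : (book H I q).edgeSet)) := by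
    constructor
    · rintro ⟨j, e, he⟩ ⟨j', e', he'⟩ h
      simp only [Subtype.mk.injEq] at h
      obtain ⟨hj, he2⟩ := book_edge_inj H hI q he he' h
      simp [hj, he2]
    · rintro ⟨e', he'⟩
      obtain ⟨j, e, he, hmap⟩ := (mem_book_edgeSet H I q e').1 he'
      exact ⟨⟨j, e, he⟩, by simp [hmap]⟩
  calc Nat.card (book H I q).edgeSet = Nat.card (Fin q × H.edgeSet) :=
        (Nat.card_eq_of_bijective _ hb).symm
    _ = q * Nat.card H.edgeSet := by
        rw [Nat.card_prod, Nat.card_eq_fintype_card, Fintype.card_fin]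

lemma edgeFun_book (W : Graphon) (H : SimpleGraph V) {I : Finset V} (hI : IndepIn H I) (q : ℕ)
    (X : BookVerts V I q → unitI) :
    edgeFun W (book H I q) X = ∏ j : Fin q, edgeFun W H (fun v => X (bookEmb I q j v)) := by
  have hre : ∀ j : Fin q, edgeFun W H (fun v => X (bookEmb I q j v))
      = ∏ e ∈ H.edgeSet.toFinite.toFinset, edgeVal W X (Sym2.map (bookEmb I q j) e) := by
    intro j
    rw [edgeFun_eq_prod]
    refine Finset.prod_congr rfl fun e _ => ?_
    rw [edgeVal_map]
    rfl
  simp only [hre]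
  rw [edgeFun_eq_prod, ← Finset.prod_product']
  refine (Finset.prod_bij (fun p _ => Sym2.map (bookEmb I q p.1) p.2) ?_ ?_ ?_ ?_).symm
  · rintro ⟨j, e⟩ hp
    simp only [Finset.mem_product, Set.Finite.mem_toFinset] at hp ⊢
    exact (mem_book_edgeSet H I q _).2 ⟨j, e, hp.2, rfl⟩
  · rintro ⟨j, e⟩ hp ⟨j', e'⟩ hp' h
    simp only [Finset.mem_product, Set.Finite.mem_toFinset] at hp hp'
    dsimp only at h
    obtain ⟨hj, he⟩ := book_edge_inj H hI q hp.2 hp'.2 h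
    simp [hj, he]
  · intro e' he'
    rw [Set.Finite.mem_toFinset] at he'
    obtain ⟨j, e, he, hmap⟩ := (mem_book_edgeSet H I q e').1 he'
    exact ⟨(j, e), by simp [Finset.mem_product, Set.Finite.mem_toFinset, he], hmap⟩
  · intro p hp
    rfl

end BookEdges


/-! ### density of the book -/

section BookDensity

variable {V : Type} [Fintype V] [DecidableEq V]

lemma homDensity_book (W : Graphon) (H : SimpleGraph V) {I : Finset V} (hI : IndepIn H I)
    (q : ℕ) :
    homDensity (book H I q) W
      = ∫ x : {v : V // v ∈ I} → unitI, (pageInt W H I x) ^ q := by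
  have key : ∀ x : {v : V // v ∈ I} → unitI,
      (∫ y : (Fin q × {v : V // v ∉ I}) → unitI, edgeFun W (book H I q) (Sum.elim x y))
        = (pageInt W H I x) ^ q := by
    intro x
    have h1 : ∀ y : (Fin q × {v : V // v ∉ I}) → unitI,
        edgeFun W (book H I q) (Sum.elim x y)
          = ∏ j : Fin q, edgeFun W H (glue I x (fun b => y (j, b))) := by
      intro y
      rw [edgeFun_book W H hI q]
      refine Finset.prod_congr rfl fun j _ => congrArg _ (funext fun v => ?_)
      unfold bookEmb glue
      by_cases h : v ∈ I <;> simp [h]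
    have hcur := (IBcurry_mp (Fin q) ({v : V // v ∉ I}) unitI).integral_comp'
      (g := fun Y : Fin q → ({v : V // v ∉ I} → unitI) =>
        ∏ j, edgeFun W H (glue I x (Y j)))
    calc (∫ y : (Fin q × {v : V // v ∉ I}) → unitI, edgeFun W (book H I q) (Sum.elim x y))
        = ∫ y : (Fin q × {v : V // v ∉ I}) → unitI,
            ∏ j : Fin q, edgeFun W H (glue I x (fun b => y (j, b))) := congrArg _ (funext h1)
      _ = ∫ Y : Fin q → ({v : V // v ∉ I} → unitI),
            ∏ j, edgeFun W H (glue I x (Y j)) := hcur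
      _ = (∫ z : {v : V // v ∉ I} → unitI, edgeFun W H (glue I x z)) ^ q := by
          rw [show (volume : Measure (Fin q → ({v : V // v ∉ I} → unitI)))
            = Measure.pi fun _ => volume from volume_pi]
          rw [MeasureTheory.integral_fintype_prod_eq_pow (ι := Fin q)
            (fun z : {v : V // v ∉ I} → unitI => edgeFun W H (glue I x z))]
          simp
      _ = (pageInt W H I x) ^ q := rfl
  rw [homDensity_eq, IBsum_split (fun X => edgeFun W (book H I q) X)
    (edgeFun_measurable W _) (fun X => edgeFun_abs_le_one W _ _)]
  exact congrArg _ (funext key)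

end BookDensity


/-! ### the analytic inequalities -/

lemma two_pow_ineq (q : ℕ) {a b : ℝ} (ha : 0 ≤ a) (hb : 0 ≤ b) :
    (2:ℝ) ^ (1 - (q:ℤ)) * (a + b) ^ q ≤ a ^ q + b ^ q := by
  have hc := (convexOn_pow (𝕜 := ℝ) q).2 (Set.mem_Ici.2 ha) (Set.mem_Ici.2 hb)
    (by norm_num : (0:ℝ) ≤ 1/2) (by norm_num : (0:ℝ) ≤ 1/2) (by norm_num)
  simp only [smul_eq_mul] at hc
  have hc' : ((a + b)/2) ^ q ≤ (a ^ q + b ^ q)/2 := by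
    have h1 : (a + b)/2 = 1/2 * a + 1/2 * b := by ring
    rw [h1]
    calc (1/2 * a + 1/2 * b) ^ q ≤ 1/2 * a ^ q + 1/2 * b ^ q := hc
      _ = (a ^ q + b ^ q)/2 := by ring
  have h2q : (0:ℝ) < 2 ^ q := by positivity
  have hz : (2:ℝ) ^ (1 - (q:ℤ)) = 2 / 2 ^ q := by
    rw [zpow_sub₀ (two_ne_zero), zpow_one, zpow_natCast]
  rw [hz]
  have hdiv : (2:ℝ) / 2 ^ q * (a + b) ^ q = 2 * ((a + b)/2) ^ q := by
    rw [div_pow]; field_simp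
  rw [hdiv]
  linarith

lemma jensen_pow {A : Type} [Fintype A] (q : ℕ) (f : (A → unitI) → ℝ)
    (hmeas : Measurable f) (h0 : ∀ x, 0 ≤ f x) (hbd : ∀ x, f x ≤ 2) :
    (∫ x, f x) ^ q ≤ ∫ x, (f x) ^ q := by
  have habs : ∀ x, |f x| ≤ 2 := fun x => abs_le.2 ⟨by linarith [h0 x], hbd x⟩
  have hgi : Integrable (fun x => (f x) ^ q) :=
    IBintegrable (hmeas.pow_const q) (C := 2 ^ q) (fun x => by
      rw [abs_pow]; exact pow_le_pow_left₀ (abs_nonneg _) (habs x) q)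
  exact (convexOn_pow (𝕜 := ℝ) q).map_integral_le (continuous_pow q).continuousOn
    isClosed_Ici (Filter.Eventually.of_forall fun x => Set.mem_Ici.2 (h0 x))
    (IBintegrable hmeas habs) hgi

lemma book_step {V : Type} [Fintype V] [DecidableEq V] (H : SimpleGraph V) (m : ℕ)
    (hm : Nat.card H.edgeSet = m)
    (hcommon : ∀ W : Graphon,
      (2:ℝ) ^ (1 - (m:ℤ)) ≤ homDensity H W + homDensity H W.compl)
    (q : ℕ) (I : Finset V) (hI : IndepIn H I) :
    (∀ W : Graphon, (2:ℝ) ^ (1 - ((q * m : ℕ):ℤ))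
        ≤ homDensity (book H I q) W + homDensity (book H I q) W.compl)
      ∧ Nat.card (book H I q).edgeSet = q * m := by
  refine ⟨fun W => ?_, by rw [book_edge_count H hI q, hm]⟩
  set D := pageInt W H I with hD
  set D' := pageInt W.compl H I with hD'
  have hDm : Measurable D := pageInt_measurable W H I
  have hD'm : Measurable D' := pageInt_measurable W.compl H I
  have hD0 : ∀ x, 0 ≤ D x := pageInt_nonneg W H I
  have hD'0 : ∀ x, 0 ≤ D' x := pageInt_nonneg W.compl H I
  have hD1 : ∀ x, D x ≤ 1 := pageInt_le_one W H I
  have hD'1 : ∀ x, D' x ≤ 1 := pageInt_le_one W.compl H I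
  have habs : ∀ x, |D x ^ q| ≤ 1 := fun x => by
    rw [abs_pow]
    exact pow_le_one₀ (abs_nonneg _) (pageInt_abs_le_one W H I x)
  have habs' : ∀ x, |D' x ^ q| ≤ 1 := fun x => by
    rw [abs_pow]
    exact pow_le_one₀ (abs_nonneg _) (pageInt_abs_le_one W.compl H I x)
  have intDq : Integrable (fun x => D x ^ q) := IBintegrable (hDm.pow_const q) habs
  have intD'q : Integrable (fun x => D' x ^ q) := IBintegrable (hD'm.pow_const q) habs'
  have intD : Integrable D := IBintegrable hDm (pageInt_abs_le_one W H I)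
  have intD' : Integrable D' := IBintegrable hD'm (pageInt_abs_le_one W.compl H I)
  have intSpow : Integrable (fun x => (D x + D' x) ^ q) := by
    refine IBintegrable ((hDm.add hD'm).pow_const q) (C := 2 ^ q) fun x => ?_
    rw [abs_pow]
    exact pow_le_pow_left₀ (abs_nonneg _)
      (abs_le.2 ⟨by linarith [hD0 x, hD'0 x], by linarith [hD1 x, hD'1 x]⟩) q
  have key1 : homDensity (book H I q) W + homDensity (book H I q) W.compl
      = ∫ x, (D x ^ q + D' x ^ q) := by
    rw [homDensity_book W H hI q, homDensity_book W.compl H hI q, ← integral_add intDq intD'q]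
  have step1 : (∫ x, (2:ℝ) ^ (1 - (q:ℤ)) * (D x + D' x) ^ q)
      ≤ ∫ x, (D x ^ q + D' x ^ q) :=
    integral_mono (intSpow.const_mul _) (intDq.add intD'q)
      (fun x => two_pow_ineq q (hD0 x) (hD'0 x))
  have hjen : (∫ x, (D x + D' x)) ^ q ≤ ∫ x, (D x + D' x) ^ q :=
    jensen_pow q (fun x => D x + D' x) (hDm.add hD'm)
      (fun x => by show 0 ≤ D x + D' x; linarith [hD0 x, hD'0 x])
      (fun x => by show D x + D' x ≤ 2; linarith [hD1 x, hD'1 x])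
  have step2 : (2:ℝ) ^ (1 - (q:ℤ)) * (∫ x, (D x + D' x)) ^ q
      ≤ ∫ x, (2:ℝ) ^ (1 - (q:ℤ)) * (D x + D' x) ^ q := by
    rw [integral_const_mul]
    exact mul_le_mul_of_nonneg_left hjen (by positivity)
  have hint : (∫ x, (D x + D' x)) = homDensity H W + homDensity H W.compl := by
    rw [integral_add intD intD', hD, hD', ← homDensity_split, ← homDensity_split]
  have hlow : (2:ℝ) ^ (1 - (m:ℤ)) ≤ ∫ x, (D x + D' x) := by
    rw [hint]; exact hcommon W
  have hpow : ((2:ℝ) ^ (1 - (m:ℤ))) ^ q ≤ (∫ x, (D x + D' x)) ^ q :=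
    pow_le_pow_left₀ (by positivity) hlow q
  calc (2:ℝ) ^ (1 - ((q * m : ℕ):ℤ))
      = (2:ℝ) ^ (1 - (q:ℤ)) * ((2:ℝ) ^ (1 - (m:ℤ))) ^ q := by
        rw [← zpow_natCast ((2:ℝ) ^ (1 - (m:ℤ))) q, ← zpow_mul,
          ← zpow_add₀ (two_ne_zero : (2:ℝ) ≠ 0)]
        congr 1
        push_cast
        ring
    _ ≤ (2:ℝ) ^ (1 - (q:ℤ)) * (∫ x, (D x + D' x)) ^ q :=
        mul_le_mul_of_nonneg_left hpow (by positivity)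
    _ ≤ ∫ x, (2:ℝ) ^ (1 - (q:ℤ)) * (D x + D' x) ^ q := step2
    _ ≤ ∫ x, (D x ^ q + D' x ^ q) := step1
    _ = homDensity (book H I q) W + homDensity (book H I q) W.compl := key1.symm


/-- commonality is preserved under iterating the book operation:
if `H` with `m` edges satisfies the commonality inequality, then the iterated
book `(H_{I₁}^q)_{I₂}^{q'}` is common and has `q·q'·m` edges. -/
theorem iterated_book_common {V : Type} [Fintype V] [DecidableEq V]
    (H : SimpleGraph V) (m : ℕ) (hm : Nat.card H.edgeSet = m)
    (hcommon : ∀ W : Graphon,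
      (2:ℝ) ^ (1 - (m:ℤ)) ≤ homDensity H W + homDensity H W.compl)
    (q q' : ℕ) (hq : 0 < q) (hq' : 0 < q')
    (I₁ : Finset V) (hI₁ : IndepIn H I₁)
    (I₂ : Finset (BookVerts V I₁ q)) (hI₂ : IndepIn (book H I₁ q) I₂) :
    IsCommon (book (book H I₁ q) I₂ q') ∧
      Nat.card (book (book H I₁ q) I₂ q').edgeSet = q * q' * m := by
  obtain ⟨hc1, he1⟩ := book_step H m hm hcommon q I₁ hI₁
  obtain ⟨hc2, he2⟩ := book_step (book H I₁ q) (q * m) he1 hc1 q' I₂ hI₂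
  refine ⟨fun W => ?_, by rw [he2]; ring⟩
  rw [he2]
  exact hc2 W
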